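/- Let A be an n×n binary matrix and h ∈ [0,1]ⁿ. For a fixed index k, the function f(x) = ∑_{j≠k} |A_{kj} − x h_j| restricted to x ∈ [0,1] attains its minimum at x = 0 or x = 1. -/

import Mathlib

theorem stmt16 (n : ℕ) (A : Matrix (Fin n) (Fin n) ℝ)
    (hA : ∀ i j, A i j = 0 ∨ A i j = 1)
    (h : Fin n → ℝ) (hh : ∀ i, 0 ≤ h i ∧ h i ≤ 1) (k : Fin n) :
    (∀ x ∈ Set.Icc (0 : ℝ) 1,
        (∑ j ∈ Finset.univ \ {k}, |A k j - (0 : ℝ) * h j|) ≤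
          ∑ j ∈ Finset.univ \ {k}, |A k j - x * h j|) ∨
      ∀ x ∈ Set.Icc (0 : ℝ) 1,
        (∑ j ∈ Finset.univ \ {k}, |A k j - (1 : ℝ) * h j|) ≤
          ∑ j ∈ Finset.univ \ {k}, |A k j - x * h j| := by
  set s := Finset.univ \ ({k} : Finset (Fin n)) with hs
  have key : ∀ x ∈ Set.Icc (0 : ℝ) 1,
      (∑ j ∈ s, |A k j - x * h j|) =
        (∑ j ∈ s, A k j) + x * ∑ j ∈ s, (1 - 2 * A k j) * h j := by
    intro x hx
    rw [Finset.mul_sum, ← Finset.sum_add_distrib]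
    refine Finset.sum_congr rfl fun j _ => ?_
    have h0 : 0 ≤ x * h j := mul_nonneg hx.1 (hh j).1
    have h1 : x * h j ≤ 1 := by
      calc x * h j ≤ 1 * 1 := by
            exact mul_le_mul hx.2 (hh j).2 (hh j).1 zero_le_one
        _ = 1 := one_mul 1
    rcases hA k j with hA0 | hA1
    · rw [hA0]
      rw [abs_of_nonpos (by linarith)]
      ring
    · rw [hA1]
      rw [abs_of_nonneg (by linarith)]
      ring
  set S := ∑ j ∈ s, (1 - 2 * A k j) * h j with hS
  rcases le_or_gt 0 S with hSpos | hSneg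
  · left
    intro x hx
    rw [key 0 (by constructor <;> norm_num), key x hx]
    nlinarith [mul_nonneg hx.1 hSpos]
  · right
    intro x hx
    rw [key 1 (by constructor <;> norm_num), key x hx]
    nlinarith [mul_nonneg (by linarith [hx.2] : (0:ℝ) ≤ 1 - x) (le_of_lt (neg_pos.mpr hSneg))]
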